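/- For λ ∈ ℂ* and α ∈ ℂ, the Virasoro module Ω(λ,α) is irreducible if and only if α ≠ 0. -/

import Mathlib

set_option linter.unnecessarySimpa false

open TensorProduct

/-- Substitution `X ↦ X - k` on `ℂ[X]`, i.e. `f(X) ↦ f(X - k)`. -/
noncomputable def shiftP (k : ℂ) : Polynomial ℂ →ₗ[ℂ] Polynomial ℂ :=
  (Polynomial.aeval (Polynomial.X - Polynomial.C k)).toLinearMap

/-- The operator `L_k` on the Virasoro module `Ω(λ,α) = ℂ[X]`:
`L_k f(X) = λ^k (X - kα) f(X - k)`. -/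
noncomputable def omegaL (lam al : ℂ) (k : ℤ) : Polynomial ℂ →ₗ[ℂ] Polynomial ℂ :=
  (lam ^ k) •
    ((LinearMap.mulLeft ℂ (Polynomial.X - Polynomial.C ((k : ℂ) * al))).comp (shiftP (k : ℂ)))

open Polynomial in
lemma omegaL_apply (lam al : ℂ) (k : ℤ) (x : Polynomial ℂ) :
    omegaL lam al k x =
      lam ^ k • ((X - C ((k : ℂ) * al)) * (x.comp (X - C (k : ℂ)))) := by
  simp [omegaL, shiftP, Polynomial.comp_eq_aeval]

open Polynomial in
/-- For `λ ∈ ℂ*` and `α ∈ ℂ`, the Virasoro module `Ω(λ,α)` is irreducible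
if and only if `α ≠ 0`. -/
theorem statement1 (lam al : ℂ) (hlam : lam ≠ 0) :
    ((∃ p : Polynomial ℂ, p ≠ 0) ∧
      ∀ N : Submodule ℂ (Polynomial ℂ),
        (∀ k : ℤ, ∀ x ∈ N, omegaL lam al k x ∈ N) → N = ⊥ ∨ N = ⊤)
    ↔ al ≠ 0 := by
  constructor
  · rintro ⟨-, hirr⟩ rfl
    -- counterexample: the ideal (X)
    set N : Submodule ℂ (Polynomial ℂ) :=
      Submodule.restrictScalars ℂ (Ideal.span {(X : Polynomial ℂ)}) with hNdef
    have hinv : ∀ k : ℤ, ∀ x ∈ N, omegaL lam 0 k x ∈ N := by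
      intro k x hx
      rw [omegaL_apply]
      refine N.smul_mem _ ?_
      have : (X : Polynomial ℂ) ∣ (X - C ((k : ℂ) * 0)) * (x.comp (X - C (k : ℂ))) := by
        simpa using Dvd.intro _ rfl
      simpa [hNdef, Ideal.mem_span_singleton] using this
    rcases hirr N hinv with h | h
    · have : (X : Polynomial ℂ) ∈ N := by
        simp [hNdef, Ideal.mem_span_singleton]
      rw [h, Submodule.mem_bot] at this
      exact Polynomial.X_ne_zero this
    · have : (1 : Polynomial ℂ) ∈ N := by rw [h]; trivial
      rw [hNdef, Submodule.restrictScalars_mem, Ideal.mem_span_singleton] at this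
      exact Polynomial.not_isUnit_X (isUnit_of_dvd_one this)
  · intro hal
    refine ⟨⟨1, one_ne_zero⟩, fun N hN => ?_⟩
    by_cases hbot : N = ⊥
    · exact Or.inl hbot
    right
    -- multiplication by X preserves N
    have hX : ∀ x ∈ N, (X : Polynomial ℂ) * x ∈ N := by
      intro x hx
      have := hN 0 x hx
      simpa [omegaL_apply] using this
    have hXpow : ∀ (n : ℕ), ∀ x ∈ N, (X : Polynomial ℂ) ^ n * x ∈ N := by
      intro n
      induction n with
      | zero => simpa using fun x hx => hx
      | succ n ih =>
        intro x hx
        have : (X : Polynomial ℂ) ^ (n + 1) * x = X * (X ^ n * x) := by ring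
        rw [this]; exact hX _ (ih x hx)
    have hmul : ∀ (p : Polynomial ℂ), ∀ x ∈ N, p * x ∈ N := by
      intro p
      induction p using Polynomial.induction_on' with
      | add p q hp hq =>
        intro x hx
        rw [add_mul]; exact N.add_mem (hp x hx) (hq x hx)
      | monomial n a =>
        intro x hx
        rw [← Polynomial.C_mul_X_pow_eq_monomial, mul_assoc, ← Polynomial.smul_eq_C_mul]
        exact N.smul_mem _ (hXpow n x hx)
    -- N as an ideal
    let I : Ideal (Polynomial ℂ) :=
      { carrier := (N : Set (Polynomial ℂ))
        add_mem' := fun h1 h2 => N.add_mem h1 h2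
        zero_mem' := N.zero_mem
        smul_mem' := fun p x hx => hmul p x hx }
    have hmemI : ∀ x, x ∈ I ↔ x ∈ N := fun x => Iff.rfl
    obtain ⟨g, hg⟩ := (IsPrincipalIdealRing.principal I).principal
    have hgN : g ∈ N := by
      rw [← hmemI, hg]; exact Ideal.subset_span rfl
    have hgne : g ≠ 0 := by
      rintro rfl
      apply hbot
      rw [eq_bot_iff]
      intro x hx
      have : x ∈ I := hx
      rw [hg, Ideal.submodule_span_eq, Ideal.mem_span_singleton] at this
      simpa using zero_dvd_iff.mp this
    -- divisibility from invariance
    have hdvd : ∀ k : ℤ, g ∣ (X - C ((k : ℂ) * al)) * (g.comp (X - C (k : ℂ))) := by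
      intro k
      have h1 := hN k g hgN
      rw [omegaL_apply] at h1
      have h2 : (X - C ((k : ℂ) * al)) * (g.comp (X - C (k : ℂ))) ∈ N := by
        have := N.smul_mem ((lam ^ k)⁻¹) h1
        rwa [smul_smul, inv_mul_cancel₀ (zpow_ne_zero k hlam), one_smul] at this
      have : (X - C ((k : ℂ) * al)) * (g.comp (X - C (k : ℂ))) ∈ I := h2
      rw [hg, Ideal.submodule_span_eq, Ideal.mem_span_singleton] at this
      exact this
    -- g has no roots
    have hnoroot : ∀ z : ℂ, ¬ g.IsRoot z := by
      intro z₀ hz₀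
      have hroots : ∀ k : ℤ, (k : ℂ) * al ≠ z₀ → g.IsRoot (z₀ - k) := by
        intro k hk
        obtain ⟨q, hq⟩ := hdvd k
        have := congrArg (Polynomial.eval z₀) hq
        simp [Polynomial.eval_comp, hz₀.eq_zero] at this
        rcases this with h | h
        · exact absurd (by linear_combination -h) hk
        · exact h
      have hTinf : Set.Infinite {k : ℤ | (k : ℂ) * al ≠ z₀} := by
        have hfin : Set.Finite {k : ℤ | (k : ℂ) * al = z₀} := by
          apply Set.Subsingleton.finite
          intro a ha b hb
          rw [Set.mem_setOf_eq] at ha hb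
          have : (a : ℂ) = (b : ℂ) := mul_right_cancel₀ hal (ha.trans hb.symm)
          exact_mod_cast this
        exact hfin.infinite_compl
      have himg : Set.Infinite ((fun k : ℤ => z₀ - k) '' {k : ℤ | (k : ℂ) * al ≠ z₀}) := by
        apply Set.Infinite.image _ hTinf
        intro a _ b _ hab
        have : (a : ℂ) = b := by linear_combination -hab
        exact_mod_cast this
      have hsub : ((fun k : ℤ => z₀ - k) '' {k : ℤ | (k : ℂ) * al ≠ z₀}) ⊆ {x | g.IsRoot x} := by
        rintro _ ⟨k, hk, rfl⟩
        exact hroots k hk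
      exact hgne (Polynomial.eq_zero_of_infinite_isRoot g (himg.mono hsub))
    -- hence g is a nonzero constant, so 1 ∈ N and N = ⊤
    have hunit : IsUnit g := by
      by_contra hu
      have h0 : g.degree ≠ 0 := fun h => hu (Polynomial.isUnit_iff_degree_eq_zero.mpr h)
      have : 0 < g.degree :=
        lt_of_le_of_ne (Polynomial.zero_le_degree_iff.mpr hgne) (Ne.symm h0)
      obtain ⟨z, hz⟩ := Complex.exists_root this
      exact hnoroot z hz
    obtain ⟨u, rfl⟩ := hunit
    have h1 : (1 : Polynomial ℂ) ∈ N := by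
      have := hmul (↑u⁻¹) _ hgN
      simpa using this
    rw [Submodule.eq_top_iff']
    intro x
    simpa using hmul x 1 h1
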